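/- For every n ≥ 3, the number of triangulations of a convex n-gon (i.e., sets of n−3 pairwise noncrossing diagonals) equals the Catalan number C_{n−2} = (1/(n−1))·binom(2(n−2), n−2). -/

import Mathlib

/-- Two diagonals `{a,b}` and `{c,d}` (with `a < b`, `c < d`) cross if
`a < c < b < d` or `c < a < d < b`. -/
def Crosses (p q : ℕ × ℕ) : Prop :=
  (p.1 < q.1 ∧ q.1 < p.2 ∧ p.2 < q.2) ∨ (q.1 < p.1 ∧ p.1 < q.2 ∧ q.2 < p.2)

def NC (T : Finset (ℕ × ℕ)) : Prop := ∀ p ∈ T, ∀ q ∈ T, p ≠ q → ¬ Crosses p q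

def InR (lo hi : ℕ) (p : ℕ × ℕ) : Prop := lo ≤ p.1 ∧ p.1 + 2 ≤ p.2 ∧ p.2 ≤ hi

lemma nc_subset {S T : Finset (ℕ × ℕ)} (h : S ⊆ T) (hT : NC T) : NC S :=
  fun p hp q hq => hT p (h hp) q (h hq)

lemma nc_card_bound : ∀ (N : ℕ) (T : Finset (ℕ × ℕ)) (lo hi : ℕ), T.card ≤ N → NC T →
    (∀ p ∈ T, InR lo hi p) →
    T.card ≤ hi - lo - 1 ∧ ((lo, hi) ∉ T → T.card ≤ hi - lo - 2) := by
  intro N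
  induction N with
  | zero =>
    intro T lo hi hcard _ _
    simp only [Nat.le_zero, Finset.card_eq_zero] at hcard
    subst hcard; simp
  | succ N IH =>
    intro T lo hi hcard hnc hrange
    rcases T.eq_empty_or_nonempty with rfl | hne
    · simp
    obtain ⟨ab, habT, hmax⟩ := T.exists_max_image (fun p => p.2 - p.1) hne
    obtain ⟨a, b⟩ := ab
    have hab : lo ≤ a ∧ a + 2 ≤ b ∧ b ≤ hi := hrange _ habT
    -- coverage: every element is left of a, inside [a,b], or right of b
    have hcover : ∀ p ∈ T, p.2 ≤ a ∨ (a ≤ p.1 ∧ p.2 ≤ b) ∨ b ≤ p.1 := by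
      intro ⟨c, d⟩ hp
      by_cases heq : ((c, d) : ℕ × ℕ) = (a, b)
      · rw [Prod.ext_iff] at heq; right; left; omega
      have hncab := hnc _ habT _ hp (Ne.symm heq)
      have hpr := hrange _ hp
      simp only [InR] at hpr
      have hlen : d - c ≤ b - a := hmax _ hp
      simp only [Crosses, not_or, not_and] at hncab
      rw [Prod.ext_iff] at heq
      simp only [Prod.fst, Prod.snd] at *
      omega
    have h1 := Finset.card_filter_add_card_filter_not
      (s := T) (p := fun p : ℕ × ℕ => p.2 ≤ a)
    have h2 := Finset.card_filter_add_card_filter_not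
      (s := T.filter (fun p : ℕ × ℕ => ¬ p.2 ≤ a)) (p := fun p : ℕ × ℕ => p.2 ≤ b)
    -- bound on T1
    have hb1 : (T.filter (fun p : ℕ × ℕ => p.2 ≤ a)).card ≤ a - lo - 1 := by
      have habT1 : ((a,b) : ℕ × ℕ) ∉ T.filter (fun p : ℕ × ℕ => p.2 ≤ a) := by
        simp only [Finset.mem_filter]; push_neg; intro _; omega
      have hlt : (T.filter (fun p : ℕ × ℕ => p.2 ≤ a)).card ≤ N := by
        have hsub : T.filter (fun p : ℕ × ℕ => p.2 ≤ a) ⊆ T.erase (a, b) := fun p hp =>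
          Finset.mem_erase.mpr ⟨fun h => habT1 (h ▸ hp), (Finset.mem_filter.mp hp).1⟩
        have := Finset.card_le_card hsub
        have := Finset.card_erase_of_mem habT
        omega
      refine (IH _ lo a hlt (nc_subset (Finset.filter_subset _ _) hnc) ?_).1
      intro p hp
      have h3 := hrange p (Finset.filter_subset _ _ hp)
      have h4 := (Finset.mem_filter.mp hp).2
      exact ⟨h3.1, h3.2.1, h4⟩
    -- bound on T3
    have hb3 : (T.filter (fun p : ℕ × ℕ => ¬ p.2 ≤ a ∧ ¬ p.2 ≤ b)).card ≤ hi - b - 1 := by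
      have habT3 : ((a,b) : ℕ × ℕ) ∉ T.filter (fun p : ℕ × ℕ => ¬ p.2 ≤ a ∧ ¬ p.2 ≤ b) := by
        simp only [Finset.mem_filter]; push_neg; intro _ _; omega
      have hlt : (T.filter (fun p : ℕ × ℕ => ¬ p.2 ≤ a ∧ ¬ p.2 ≤ b)).card ≤ N := by
        have hsub : T.filter (fun p : ℕ × ℕ => ¬ p.2 ≤ a ∧ ¬ p.2 ≤ b) ⊆ T.erase (a, b) :=
          fun p hp =>
          Finset.mem_erase.mpr ⟨fun h => habT3 (h ▸ hp), (Finset.mem_filter.mp hp).1⟩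
        have := Finset.card_le_card hsub
        have := Finset.card_erase_of_mem habT
        omega
      refine (IH _ b hi hlt (nc_subset (Finset.filter_subset _ _) hnc) ?_).1
      intro p hp
      have h3 := hrange p (Finset.filter_subset _ _ hp)
      have h4 := (Finset.mem_filter.mp hp).2
      have h5 := hcover p (Finset.filter_subset _ _ hp)
      refine ⟨by omega, h3.2.1, h3.2.2⟩
    -- bound on T2
    have hb2 : (T.filter (fun p : ℕ × ℕ => ¬ p.2 ≤ a ∧ p.2 ≤ b)).card ≤ b - a - 1 := by
      have habT2 : ((a,b) : ℕ × ℕ) ∈ T.filter (fun p : ℕ × ℕ => ¬ p.2 ≤ a ∧ p.2 ≤ b) := by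
        simp only [Finset.mem_filter]; exact ⟨habT, by omega, le_rfl⟩
      have hlt : ((T.filter (fun p : ℕ × ℕ => ¬ p.2 ≤ a ∧ p.2 ≤ b)).erase (a, b)).card ≤ N := by
        have hsub : (T.filter (fun p : ℕ × ℕ => ¬ p.2 ≤ a ∧ p.2 ≤ b)).erase (a, b)
            ⊆ T.erase (a, b) :=
          Finset.erase_subset_erase _ (Finset.filter_subset _ _)
        have := Finset.card_le_card hsub
        have := Finset.card_erase_of_mem habT
        omega
      have hrng : ∀ p ∈ (T.filter (fun p : ℕ × ℕ => ¬ p.2 ≤ a ∧ p.2 ≤ b)).erase (a, b),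
          InR a b p := by
        intro p hp
        have hpT : p ∈ T := Finset.filter_subset _ _ (Finset.erase_subset _ _ hp)
        have h3 := hrange p hpT
        have h4 := (Finset.mem_filter.mp (Finset.erase_subset _ _ hp)).2
        have h5 := hcover p hpT
        exact ⟨by omega, h3.2.1, h4.2⟩
      have hkey := (IH _ a b hlt
        (nc_subset ((Finset.erase_subset _ _).trans (Finset.filter_subset _ _)) hnc) hrng).2
        (Finset.notMem_erase _ _)
      have := Finset.card_erase_of_mem habT2
      have hpos : 0 < (T.filter (fun p : ℕ × ℕ => ¬ p.2 ≤ a ∧ p.2 ≤ b)).card :=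
        Finset.card_pos.mpr ⟨_, habT2⟩
      omega
    have hT2card : (T.filter (fun p : ℕ × ℕ => ¬ p.2 ≤ a)).filter (fun p : ℕ × ℕ => p.2 ≤ b)
        = T.filter (fun p : ℕ × ℕ => ¬ p.2 ≤ a ∧ p.2 ≤ b) := by
      rw [Finset.filter_filter]
    have hT3card : (T.filter (fun p : ℕ × ℕ => ¬ p.2 ≤ a)).filter (fun p : ℕ × ℕ => ¬ p.2 ≤ b)
        = T.filter (fun p : ℕ × ℕ => ¬ p.2 ≤ a ∧ ¬ p.2 ≤ b) := by
      rw [Finset.filter_filter]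
    rw [hT2card, hT3card] at h2
    constructor
    · omega
    · intro hnotin
      have : ¬ (a = lo ∧ b = hi) := fun ⟨h5, h6⟩ => hnotin (by rw [← h5, ← h6]; exact habT)
      omega

def TriR (lo hi : ℕ) (T : Finset (ℕ × ℕ)) : Prop :=
  T.card = hi - lo - 2 ∧ (∀ p ∈ T, InR lo hi p ∧ p ≠ (lo, hi)) ∧ NC T

open Classical in
noncomputable def triFinset (lo hi : ℕ) : Finset (Finset (ℕ × ℕ)) :=
  ((Finset.range (hi + 1) ×ˢ Finset.range (hi + 1)).powerset).filter (fun T => TriR lo hi T)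

lemma mem_triFinset {lo hi : ℕ} {T : Finset (ℕ × ℕ)} :
    T ∈ triFinset lo hi ↔ TriR lo hi T := by
  classical
  rw [triFinset, Finset.mem_filter, Finset.mem_powerset]
  simp only [and_iff_right_iff_imp]
  intro hT p hp
  obtain ⟨⟨h1, h2, h3⟩, _⟩ := hT.2.1 p hp
  rw [Finset.mem_product, Finset.mem_range, Finset.mem_range]
  omega

lemma apex_exists {lo hi : ℕ} (h2 : lo + 2 ≤ hi) {T : Finset (ℕ × ℕ)} (hT : TriR lo hi T) :
    ∃ k, lo < k ∧ k < hi ∧ ∀ p ∈ T, p.2 ≤ k ∨ k ≤ p.1 := by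
  obtain ⟨hcard, hrange, hnc⟩ := hT
  rcases eq_or_lt_of_le h2 with heq | h3
  · have hT0 : T = ∅ := Finset.card_eq_zero.mp (by omega)
    subst hT0
    exact ⟨lo + 1, by omega, by omega, by simp⟩
  have hne : T.Nonempty := Finset.card_pos.mp (by omega)
  obtain ⟨ab, habT, hmax⟩ := T.exists_max_image (fun p => p.2 - p.1) hne
  obtain ⟨a, b⟩ := ab
  obtain ⟨⟨ha1, ha2, ha3⟩, hane⟩ := hrange _ habT
  rcases eq_or_lt_of_le ha1 with heq | hlt
  · -- a = lo : use k = b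
    have hbhi : b < hi := by
      rcases lt_or_eq_of_le ha3 with h | h
      · exact h
      · exact absurd (Prod.ext heq.symm h) hane
    refine ⟨b, by omega, hbhi, ?_⟩
    intro ⟨c, d⟩ hp
    by_contra hcon
    push_neg at hcon
    have hne2 : ((a, b) : ℕ × ℕ) ≠ (c, d) := by
      intro hEq; rw [Prod.ext_iff] at hEq; simp only [Prod.fst, Prod.snd] at *; omega
    have hncab := hnc _ habT _ hp hne2
    obtain ⟨⟨hc1, hc2, hc3⟩, _⟩ := hrange _ hp
    have hlen : d - c ≤ b - a := hmax _ hp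
    simp only [Crosses, not_or, not_and] at hncab
    simp only [Prod.fst, Prod.snd] at *
    omega
  · -- lo < a : use k = a
    refine ⟨a, hlt, by omega, ?_⟩
    intro ⟨c, d⟩ hp
    by_contra hcon
    push_neg at hcon
    have hne2 : ((a, b) : ℕ × ℕ) ≠ (c, d) := by
      intro hEq; rw [Prod.ext_iff] at hEq; simp only [Prod.fst, Prod.snd] at *; omega
    have hncab := hnc _ habT _ hp hne2
    obtain ⟨⟨hc1, hc2, hc3⟩, _⟩ := hrange _ hp
    have hlen : d - c ≤ b - a := hmax _ hp
    simp only [Crosses, not_or, not_and] at hncab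
    simp only [Prod.fst, Prod.snd] at *
    omega

lemma apex_unique {lo hi : ℕ} {T : Finset (ℕ × ℕ)} (hT : TriR lo hi T)
    {j j' : ℕ} (hj : lo < j) (hjj : j < j') (hj' : j' < hi)
    (hu : ∀ p ∈ T, p.2 ≤ j ∨ j ≤ p.1) (hu' : ∀ p ∈ T, p.2 ≤ j' ∨ j' ≤ p.1) : False := by
  obtain ⟨hcard, hrange, hnc⟩ := hT
  have h1 := Finset.card_filter_add_card_filter_not
    (s := T) (p := fun p : ℕ × ℕ => p.2 ≤ j)
  have h2 := Finset.card_filter_add_card_filter_not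
    (s := T.filter (fun p : ℕ × ℕ => ¬ p.2 ≤ j)) (p := fun p : ℕ × ℕ => p.2 ≤ j')
  rw [Finset.filter_filter, Finset.filter_filter] at h2
  have hA : (T.filter (fun p : ℕ × ℕ => p.2 ≤ j)).card ≤ j - lo - 1 := by
    refine (nc_card_bound _ _ lo j le_rfl (nc_subset (Finset.filter_subset _ _) hnc) ?_).1
    intro p hp
    obtain ⟨⟨q1, q2, q3⟩, _⟩ := hrange p (Finset.filter_subset _ _ hp)
    exact ⟨q1, q2, (Finset.mem_filter.mp hp).2⟩
  have hB : (T.filter (fun p : ℕ × ℕ => ¬ p.2 ≤ j ∧ p.2 ≤ j')).card ≤ j' - j - 1 := by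
    refine (nc_card_bound _ _ j j' le_rfl (nc_subset (Finset.filter_subset _ _) hnc) ?_).1
    intro p hp
    obtain ⟨⟨q1, q2, q3⟩, _⟩ := hrange p (Finset.filter_subset _ _ hp)
    have h4 := (Finset.mem_filter.mp hp).2
    have h5 := hu p (Finset.filter_subset _ _ hp)
    exact ⟨by omega, q2, h4.2⟩
  have hC : (T.filter (fun p : ℕ × ℕ => ¬ p.2 ≤ j ∧ ¬ p.2 ≤ j')).card ≤ hi - j' - 1 := by
    refine (nc_card_bound _ _ j' hi le_rfl (nc_subset (Finset.filter_subset _ _) hnc) ?_).1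
    intro p hp
    obtain ⟨⟨q1, q2, q3⟩, _⟩ := hrange p (Finset.filter_subset _ _ hp)
    have h4 := (Finset.mem_filter.mp hp).2
    have h5 := hu' p (Finset.filter_subset _ _ hp)
    exact ⟨by omega, q2, q3⟩
  omega

def Edg (a b : ℕ) : Finset (ℕ × ℕ) := if a + 2 ≤ b then {(a, b)} else ∅

lemma mem_Edg {a b : ℕ} {p : ℕ × ℕ} : p ∈ Edg a b ↔ p = (a, b) ∧ a + 2 ≤ b := by
  rw [Edg]; split_ifs with h <;> simp [h]

def splitL (lo k : ℕ) (T : Finset (ℕ × ℕ)) : Finset (ℕ × ℕ) :=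
  T.filter (fun p => p.2 ≤ k ∧ p ≠ (lo, k))

def splitR (k hi : ℕ) (T : Finset (ℕ × ℕ)) : Finset (ℕ × ℕ) :=
  T.filter (fun p => k ≤ p.1 ∧ p ≠ (k, hi))

/-- Decomposition of a triangulation at an uncovered vertex `k`. -/
lemma split_spec {lo hi k : ℕ} {T : Finset (ℕ × ℕ)} (hlo : lo < k) (hhi : k < hi)
    (hT : TriR lo hi T) (hk : ∀ p ∈ T, p.2 ≤ k ∨ k ≤ p.1) :
    TriR lo k (splitL lo k T) ∧ TriR k hi (splitR k hi T) ∧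
      T = Edg lo k ∪ splitL lo k T ∪ (Edg k hi ∪ splitR k hi T) := by
  obtain ⟨hcard, hrange, hnc⟩ := hT
  have h1 := Finset.card_filter_add_card_filter_not
    (s := T) (p := fun p : ℕ × ℕ => p.2 ≤ k)
  -- left and right chunks
  have hTL : ∀ p ∈ T.filter (fun p : ℕ × ℕ => p.2 ≤ k), InR lo k p := by
    intro p hp
    obtain ⟨⟨q1, q2, q3⟩, _⟩ := hrange p (Finset.filter_subset _ _ hp)
    exact ⟨q1, q2, (Finset.mem_filter.mp hp).2⟩
  have hTR : ∀ p ∈ T.filter (fun p : ℕ × ℕ => ¬ p.2 ≤ k), InR k hi p := by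
    intro p hp
    obtain ⟨⟨q1, q2, q3⟩, _⟩ := hrange p (Finset.filter_subset _ _ hp)
    have h5 := hk p (Finset.filter_subset _ _ hp)
    have h4 := (Finset.mem_filter.mp hp).2
    exact ⟨by omega, q2, q3⟩
  have hbL := nc_card_bound _ _ lo k le_rfl (nc_subset (Finset.filter_subset _ _) hnc) hTL
  have hbR := nc_card_bound _ _ k hi le_rfl (nc_subset (Finset.filter_subset _ _) hnc) hTR
  -- cards are exactly k - lo - 1 and hi - k - 1
  have hcL : (T.filter (fun p : ℕ × ℕ => p.2 ≤ k)).card = k - lo - 1 := by omega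
  have hcR : (T.filter (fun p : ℕ × ℕ => ¬ p.2 ≤ k)).card = hi - k - 1 := by omega
  -- if k ≥ lo + 2 then (lo, k) ∈ T
  have hlomem : lo + 2 ≤ k → ((lo, k) : ℕ × ℕ) ∈ T.filter (fun p : ℕ × ℕ => p.2 ≤ k) := by
    intro hk2
    by_contra hcon
    have := hbL.2 hcon
    omega
  have hhimem : k + 2 ≤ hi → ((k, hi) : ℕ × ℕ) ∈ T.filter (fun p : ℕ × ℕ => ¬ p.2 ≤ k) := by
    intro hk2
    by_contra hcon
    have := hbR.2 hcon
    omega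
  -- splitL as erase
  have heL : splitL lo k T = (T.filter (fun p : ℕ × ℕ => p.2 ≤ k)).erase (lo, k) := by
    ext p
    simp only [splitL, Finset.mem_filter, Finset.mem_erase]
    tauto
  have heR : splitR k hi T = (T.filter (fun p : ℕ × ℕ => ¬ p.2 ≤ k)).erase (k, hi) := by
    ext p
    simp only [splitR, Finset.mem_filter, Finset.mem_erase]
    constructor
    · rintro ⟨hpT, hp1, hp2⟩; exact ⟨hp2, hpT, by
        obtain ⟨⟨q1, q2, q3⟩, _⟩ := hrange p hpT
        omega⟩
    · rintro ⟨hp2, hpT, hp1⟩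
      have h5 := hk p hpT
      obtain ⟨⟨q1, q2, q3⟩, _⟩ := hrange p hpT
      exact ⟨hpT, by omega, hp2⟩
  have hcardL : (splitL lo k T).card = k - lo - 2 := by
    rcases le_or_gt (lo + 2) k with hk2 | hk2
    · rw [heL, Finset.card_erase_of_mem (hlomem hk2), hcL]
      omega
    · have h0 : (splitL lo k T).card ≤ 0 := by
        rw [heL]
        exact le_trans (Finset.card_le_card (Finset.erase_subset _ _)) (by omega)
      omega
  have hcardR : (splitR k hi T).card = hi - k - 2 := by
    rcases le_or_gt (k + 2) hi with hk2 | hk2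
    · rw [heR, Finset.card_erase_of_mem (hhimem hk2), hcR]
      omega
    · have h0 : (splitR k hi T).card ≤ 0 := by
        rw [heR]
        exact le_trans (Finset.card_le_card (Finset.erase_subset _ _)) (by omega)
      omega
  refine ⟨⟨hcardL, ?_, nc_subset (Finset.filter_subset _ _) hnc⟩,
    ⟨hcardR, ?_, nc_subset (Finset.filter_subset _ _) hnc⟩, ?_⟩
  · intro p hp
    rw [splitL, Finset.mem_filter] at hp
    obtain ⟨⟨q1, q2, q3⟩, _⟩ := hrange p hp.1
    exact ⟨⟨q1, q2, hp.2.1⟩, hp.2.2⟩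
  · intro p hp
    rw [splitR, Finset.mem_filter] at hp
    obtain ⟨⟨q1, q2, q3⟩, _⟩ := hrange p hp.1
    exact ⟨⟨hp.2.1, q2, q3⟩, hp.2.2⟩
  · ext p
    simp only [Finset.mem_union, mem_Edg, splitL, splitR, Finset.mem_filter]
    constructor
    · intro hpT
      obtain ⟨⟨q1, q2, q3⟩, _⟩ := hrange p hpT
      rcases hk p hpT with h5 | h5
      · by_cases hpe : p = (lo, k)
        · exact Or.inl (Or.inl ⟨hpe, by rw [hpe] at q2; exact q2⟩)
        · exact Or.inl (Or.inr ⟨hpT, h5, hpe⟩)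
      · by_cases hpe : p = (k, hi)
        · exact Or.inr (Or.inl ⟨hpe, by rw [hpe] at q2; exact q2⟩)
        · exact Or.inr (Or.inr ⟨hpT, h5, hpe⟩)
    · rintro ((⟨hpe, hk2⟩ | ⟨hpT, _⟩) | (⟨hpe, hk2⟩ | ⟨hpT, _⟩))
      · exact hpe ▸ Finset.filter_subset _ _ (hlomem hk2)
      · exact hpT
      · exact hpe ▸ Finset.filter_subset _ _ (hhimem hk2)
      · exact hpT

/-- Gluing two triangulations at a vertex `k`. -/
lemma glue_spec {lo hi k : ℕ} (hlo : lo < k) (hhi : k < hi)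
    {T1 T2 : Finset (ℕ × ℕ)} (h1 : TriR lo k T1) (h2 : TriR k hi T2) :
    TriR lo hi (Edg lo k ∪ T1 ∪ (Edg k hi ∪ T2)) ∧
      (∀ p ∈ Edg lo k ∪ T1 ∪ (Edg k hi ∪ T2), p.2 ≤ k ∨ k ≤ p.1) ∧
      splitL lo k (Edg lo k ∪ T1 ∪ (Edg k hi ∪ T2)) = T1 ∧
      splitR k hi (Edg lo k ∪ T1 ∪ (Edg k hi ∪ T2)) = T2 := by
  obtain ⟨hc1, hr1, hn1⟩ := h1
  obtain ⟨hc2, hr2, hn2⟩ := h2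
  set G := Edg lo k ∪ T1 ∪ (Edg k hi ∪ T2) with hG
  -- membership characterization
  have hmem : ∀ p, p ∈ G ↔ (p = (lo, k) ∧ lo + 2 ≤ k) ∨ p ∈ T1 ∨
      (p = (k, hi) ∧ k + 2 ≤ hi) ∨ p ∈ T2 := by
    intro p
    simp only [hG, Finset.mem_union, mem_Edg]
    tauto
  -- every element is "left" or "right"
  have hclass : ∀ p ∈ G, (lo ≤ p.1 ∧ p.1 + 2 ≤ p.2 ∧ p.2 ≤ k) ∨
      (k ≤ p.1 ∧ p.1 + 2 ≤ p.2 ∧ p.2 ≤ hi) := by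
    intro p hp
    rcases (hmem p).mp hp with ⟨rfl, h⟩ | h | ⟨rfl, h⟩ | h
    · left; exact ⟨le_rfl, h, le_rfl⟩
    · left; exact (hr1 p h).1
    · right; exact ⟨le_rfl, h, le_rfl⟩
    · right; exact (hr2 p h).1
  have huncov : ∀ p ∈ G, p.2 ≤ k ∨ k ≤ p.1 := by
    intro p hp
    rcases hclass p hp with h | h
    · left; exact h.2.2
    · right; exact h.1
  -- cardinality
  have hdisj1 : Disjoint (Edg lo k ∪ T1) (Edg k hi ∪ T2) := by
    rw [Finset.disjoint_left]
    intro p hp hp'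
    have hL : p.2 ≤ k := by
      rcases Finset.mem_union.mp hp with h | h
      · rw [mem_Edg] at h; rw [h.1]
      · exact (hr1 p h).1.2.2
    have hR : k ≤ p.1 ∧ p.1 + 2 ≤ p.2 := by
      rcases Finset.mem_union.mp hp' with h | h
      · rw [mem_Edg] at h; rw [h.1]; exact ⟨le_rfl, h.2⟩
      · exact ⟨(hr2 p h).1.1, (hr2 p h).1.2.1⟩
    omega
  have hdisjL : Disjoint (Edg lo k) T1 := by
    rw [Finset.disjoint_left]
    intro p hp hp'
    rw [mem_Edg] at hp
    exact (hr1 p hp').2 hp.1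
  have hdisjR : Disjoint (Edg k hi) T2 := by
    rw [Finset.disjoint_left]
    intro p hp hp'
    rw [mem_Edg] at hp
    exact (hr2 p hp').2 hp.1
  have hcardE1 : (Edg lo k).card = if lo + 2 ≤ k then 1 else 0 := by
    rw [Edg]; split_ifs <;> simp
  have hcardE2 : (Edg k hi).card = if k + 2 ≤ hi then 1 else 0 := by
    rw [Edg]; split_ifs <;> simp
  have hcardG : G.card = hi - lo - 2 := by
    rw [hG, Finset.card_union_of_disjoint hdisj1, Finset.card_union_of_disjoint hdisjL,
      Finset.card_union_of_disjoint hdisjR, hcardE1, hcardE2, hc1, hc2]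
    split_ifs <;> omega
  -- noncrossing
  have hLR : ∀ p q : ℕ × ℕ, (p.2 ≤ k ∧ k ≤ q.1) ∨ (q.2 ≤ k ∧ k ≤ p.1) → ¬ Crosses p q := by
    intro p q hpq
    simp only [Crosses, not_or, not_and]
    omega
  have hEL : ∀ q : ℕ × ℕ, lo ≤ q.1 → q.2 ≤ k → ¬ Crosses (lo, k) q ∧ ¬ Crosses q (lo, k) := by
    intro q h1' h2'
    simp only [Crosses, not_or, not_and, Prod.fst, Prod.snd]
    omega
  have hER : ∀ q : ℕ × ℕ, k ≤ q.1 → q.2 ≤ hi → ¬ Crosses (k, hi) q ∧ ¬ Crosses q (k, hi) := by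
    intro q h1' h2'
    simp only [Crosses, not_or, not_and, Prod.fst, Prod.snd]
    omega
  have hncG : NC G := by
    intro p hp q hq hne
    rcases (hmem p).mp hp with ⟨rfl, hk1⟩ | hp1 | ⟨rfl, hk1⟩ | hp1 <;>
      rcases (hmem q).mp hq with ⟨rfl, hk2⟩ | hq1 | ⟨rfl, hk2⟩ | hq1
    · exact absurd rfl hne
    · exact (hEL q (hr1 q hq1).1.1 (hr1 q hq1).1.2.2).1
    · exact hLR _ _ (Or.inl ⟨le_rfl, le_rfl⟩)
    · exact hLR _ _ (Or.inl ⟨le_rfl, (hr2 q hq1).1.1⟩)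
    · exact (hEL p (hr1 p hp1).1.1 (hr1 p hp1).1.2.2).2
    · exact hn1 p hp1 q hq1 hne
    · exact hLR _ _ (Or.inl ⟨(hr1 p hp1).1.2.2, le_rfl⟩)
    · exact hLR _ _ (Or.inl ⟨(hr1 p hp1).1.2.2, (hr2 q hq1).1.1⟩)
    · exact hLR _ _ (Or.inr ⟨le_rfl, le_rfl⟩)
    · exact hLR _ _ (Or.inr ⟨(hr1 q hq1).1.2.2, le_rfl⟩)
    · exact absurd rfl hne
    · exact (hER q (hr2 q hq1).1.1 (hr2 q hq1).1.2.2).1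
    · exact hLR _ _ (Or.inr ⟨le_rfl, (hr2 p hp1).1.1⟩)
    · exact hLR _ _ (Or.inr ⟨(hr1 q hq1).1.2.2, (hr2 p hp1).1.1⟩)
    · exact (hER p (hr2 p hp1).1.1 (hr2 p hp1).1.2.2).2
    · exact hn2 p hp1 q hq1 hne
  -- range conditions for G
  have hrG : ∀ p ∈ G, InR lo hi p ∧ p ≠ (lo, hi) := by
    intro p hp
    rcases hclass p hp with h | h
    · refine ⟨⟨h.1, h.2.1, by omega⟩, fun hc => ?_⟩
      rw [hc] at h
      simp only [Prod.fst, Prod.snd] at h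
      omega
    · refine ⟨⟨by omega, h.2.1, h.2.2⟩, fun hc => ?_⟩
      rw [hc] at h
      simp only [Prod.fst, Prod.snd] at h
      omega
  refine ⟨⟨hcardG, hrG, hncG⟩, huncov, ?_, ?_⟩
  · ext p
    simp only [splitL, Finset.mem_filter, hmem p]
    constructor
    · rintro ⟨(⟨rfl, hk1⟩ | hp1 | ⟨rfl, hk1⟩ | hp1), h5, h6⟩
      · exact absurd rfl h6
      · exact hp1
      · simp only [Prod.snd] at h5; omega
      · have := (hr2 p hp1).1
        rw [InR] at this; omega
    · intro hp1
      exact ⟨Or.inr (Or.inl hp1), (hr1 p hp1).1.2.2, (hr1 p hp1).2⟩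
  · ext p
    simp only [splitR, Finset.mem_filter, hmem p]
    constructor
    · rintro ⟨(⟨rfl, hk1⟩ | hp1 | ⟨rfl, hk1⟩ | hp1), h5, h6⟩
      · simp only [Prod.fst] at h5; omega
      · have := (hr1 p hp1).1
        rw [InR] at this; omega
      · exact absurd rfl h6
      · exact hp1
    · intro hp1
      exact ⟨Or.inr (Or.inr (Or.inr hp1)), (hr2 p hp1).1.1, (hr2 p hp1).2⟩

lemma card_rec (lo hi : ℕ) (h : lo + 2 ≤ hi) :
    (triFinset lo hi).card =
      ∑ k ∈ Finset.Ioo lo hi, (triFinset lo k).card * (triFinset k hi).card := by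
  classical
  have hU : triFinset lo hi = (Finset.Ioo lo hi).biUnion
      (fun k => (triFinset lo hi).filter (fun T => ∀ p ∈ T, p.2 ≤ k ∨ k ≤ p.1)) := by
    ext T
    simp only [Finset.mem_biUnion, Finset.mem_filter, Finset.mem_Ioo]
    constructor
    · intro hT
      obtain ⟨k, hk1, hk2, hk3⟩ := apex_exists h (mem_triFinset.mp hT)
      exact ⟨k, ⟨hk1, hk2⟩, hT, hk3⟩
    · rintro ⟨k, _, hT, _⟩; exact hT
  rw [hU, Finset.card_biUnion]
  · refine Finset.sum_congr rfl ?_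
    intro k hk
    rw [Finset.mem_Ioo] at hk
    rw [← Finset.card_product]
    refine Finset.card_bij' (fun T _ => (splitL lo k T, splitR k hi T))
      (fun P _ => Edg lo k ∪ P.1 ∪ (Edg k hi ∪ P.2)) ?_ ?_ ?_ ?_
    · intro T hT
      rw [Finset.mem_filter] at hT
      obtain ⟨h1, h2, _⟩ := split_spec hk.1 hk.2 (mem_triFinset.mp hT.1) hT.2
      rw [Finset.mem_product]
      exact ⟨mem_triFinset.mpr h1, mem_triFinset.mpr h2⟩
    · intro P hP
      rw [Finset.mem_product] at hP
      obtain ⟨h1, h2, _, _⟩ := glue_spec hk.1 hk.2 (mem_triFinset.mp hP.1)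
        (mem_triFinset.mp hP.2)
      rw [Finset.mem_filter]
      exact ⟨mem_triFinset.mpr h1, h2⟩
    · intro T hT
      rw [Finset.mem_filter] at hT
      obtain ⟨_, _, h3⟩ := split_spec hk.1 hk.2 (mem_triFinset.mp hT.1) hT.2
      exact h3.symm
    · intro P hP
      rw [Finset.mem_product] at hP
      obtain ⟨_, _, h3, h4⟩ := glue_spec hk.1 hk.2 (mem_triFinset.mp hP.1)
        (mem_triFinset.mp hP.2)
      show (splitL lo k _, splitR k hi _) = P
      rw [h3, h4]
  · intro x hx y hy hxy
    simp only [Finset.coe_Ioo, Set.mem_Ioo, Function.onFun] at hx hy ⊢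
    rw [Finset.disjoint_left]
    intro T hTx hTy
    rw [Finset.mem_filter] at hTx hTy
    rcases lt_or_gt_of_ne hxy with h' | h'
    · exact apex_unique (mem_triFinset.mp hTx.1) hx.1 h' hy.2 hTx.2 hTy.2
    · exact apex_unique (mem_triFinset.mp hTx.1) hy.1 h' hx.2 hTy.2 hTx.2

lemma triFinset_card : ∀ d : ℕ, ∀ lo : ℕ, 1 ≤ d →
    (triFinset lo (lo + d)).card = catalan (d - 1) := by
  intro d
  induction d using Nat.strong_induction_on with
  | _ d IH =>
    intro lo hd
    rcases eq_or_lt_of_le hd with h1 | h2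
    · -- d = 1
      subst h1
      have h0 : triFinset lo (lo + 1) = {∅} := by
        ext T
        rw [mem_triFinset, Finset.mem_singleton, TriR]
        constructor
        · intro ⟨hc, _, _⟩
          exact Finset.card_eq_zero.mp (by omega)
        · rintro rfl
          refine ⟨by simp, by simp, by intro p hp; simp at hp⟩
      rw [h0]
      simp [catalan]
    · -- d ≥ 2
      rw [card_rec lo (lo + d) (by omega)]
      have hsum : ∑ k ∈ Finset.Ioo lo (lo + d),
          (triFinset lo k).card * (triFinset k (lo + d)).card
          = ∑ i ∈ Finset.range (d - 1), catalan i * catalan (d - 2 - i) := by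
        refine Finset.sum_bij' (fun k _ => k - (lo + 1)) (fun i _ => lo + 1 + i)
          ?_ ?_ ?_ ?_ ?_
        · intro k hk
          simp only [Finset.mem_Ioo] at hk
          simp only [Finset.mem_range]
          omega
        · intro i hi
          simp only [Finset.mem_range] at hi
          simp only [Finset.mem_Ioo]
          omega
        · intro k hk
          simp only [Finset.mem_Ioo] at hk
          omega
        · intro i hi
          simp only [Finset.mem_range] at hi
          omega
        · intro k hk
          rw [Finset.mem_Ioo] at hk
          have e1 : lo + (k - lo) = k := by omega
          have e2 : k + (lo + d - k) = lo + d := by omega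
          have hL : (triFinset lo k).card = catalan (k - lo - 1) := by
            have h3 := IH (k - lo) (by omega) lo (by omega)
            rw [e1] at h3
            exact h3
          have hR : (triFinset k (lo + d)).card = catalan (lo + d - k - 1) := by
            have h3 := IH (lo + d - k) (by omega) k (by omega)
            rw [e2] at h3
            exact h3
          rw [hL, hR, show k - lo - 1 = k - (lo + 1) from by omega,
            show lo + d - k - 1 = d - 2 - (k - (lo + 1)) from by omega]
      rw [hsum, show d - 1 = d - 2 + 1 from by omega, ← Fin.sum_univ_eq_sum_range,
        ← catalan_succ]

/-- `p = (a, b)` is a diagonal of the convex `n`-gon with vertices `1,…,n` in cyclic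
order: `1 ≤ a < b ≤ n`, `a` and `b` are not adjacent in cyclic order. -/
def IsDiagonal (n : ℕ) (p : ℕ × ℕ) : Prop :=
  1 ≤ p.1 ∧ p.1 + 2 ≤ p.2 ∧ p.2 ≤ n ∧ ¬(p.1 = 1 ∧ p.2 = n)

/-- A triangulation of the convex `n`-gon is a set of `n - 3` pairwise noncrossing
diagonals. -/
def IsTriangulation (n : ℕ) (T : Finset (ℕ × ℕ)) : Prop :=
  T.card = n - 3 ∧ (∀ p ∈ T, IsDiagonal n p) ∧
    ∀ p ∈ T, ∀ q ∈ T, p ≠ q → ¬ Crosses p q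

/-- **Theorem.** For every `n ≥ 3`, the number of triangulations of a convex `n`-gon
equals the Catalan number `C_{n-2} = (1/(n-1)) * binom(2(n-2), n-2)`. -/
theorem card_triangulations_eq_catalan (n : ℕ) (hn : 3 ≤ n) :
    Nat.card {T : Finset (ℕ × ℕ) // IsTriangulation n T} =
      (2 * (n - 2)).choose (n - 2) / (n - 1) := by
  have hiff : ∀ T : Finset (ℕ × ℕ), IsTriangulation n T ↔ T ∈ triFinset 1 n := by
    intro T
    rw [mem_triFinset]
    unfold IsTriangulation TriR IsDiagonal InR
    constructor
    · rintro ⟨h1, h2, h3⟩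
      refine ⟨by omega, ?_, h3⟩
      intro p hp
      obtain ⟨q1, q2, q3, q4⟩ := h2 p hp
      exact ⟨⟨q1, q2, q3⟩, fun hc => q4 (by rw [hc]; exact ⟨rfl, rfl⟩)⟩
    · rintro ⟨h1, h2, h3⟩
      refine ⟨by omega, ?_, h3⟩
      intro p hp
      obtain ⟨⟨q1, q2, q3⟩, q4⟩ := h2 p hp
      refine ⟨q1, q2, q3, fun hc => q4 ?_⟩
      rw [Prod.ext_iff]
      exact hc
  rw [Nat.card_congr (Equiv.subtypeEquivRight hiff), Nat.card_eq_finsetCard]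
  have h3 := triFinset_card (n - 1) 1 (by omega)
  rw [show (1 : ℕ) + (n - 1) = n from by omega] at h3
  rw [h3, show n - 1 - 1 = n - 2 from by omega, catalan_eq_centralBinom_div,
    show n - 2 + 1 = n - 1 from by omega]
  rfl
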